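/- Let V be a complex vector space of dimension n and φ ∈ End(V). If φ is diagonalizable with n distinct eigenvalues, then the algebraic multiplicity of the eigenvalue 0 of ad φ is exactly n. Conversely, if the multiplicity of 0 as a root of the characteristic polynomial of ad φ equals n, then φ is diagonalizable with n distinct eigenvalues. -/

import Mathlib

open Polynomial

section Aux

variable {V : Type*} [AddCommGroup V] [Module ℂ V] [FiniteDimensional ℂ V]

private lemma aux_charpoly_diagonal {ι : Type*} [Fintype ι] [DecidableEq ι] (d : ι → ℂ) :
    (Matrix.diagonal d).charpoly = ∏ i, (X - C (d i)) := by
  have h : (Matrix.diagonal d).charmatrix = Matrix.diagonal (fun i => X - C (d i)) := by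
    refine Matrix.ext fun i j => ?_
    by_cases hij : i = j
    · subst hij; rw [Matrix.charmatrix_apply_eq, Matrix.diagonal_apply_eq,
        Matrix.diagonal_apply_eq]
    · rw [Matrix.charmatrix_apply_ne _ _ _ hij, Matrix.diagonal_apply_ne _ hij,
        Matrix.diagonal_apply_ne _ hij, map_zero, neg_zero]
  rw [Matrix.charpoly, h, Matrix.det_diagonal]

private lemma aux_charpoly_of_diag {W : Type*} [AddCommGroup W] [Module ℂ W]
    [FiniteDimensional ℂ W] {ι : Type*} [Fintype ι] [DecidableEq ι]
    (b : Module.Basis ι ℂ W) (f : W →ₗ[ℂ] W) (d : ι → ℂ) (h : ∀ i, f (b i) = d i • b i) :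
    f.charpoly = ∏ i, (X - C (d i)) := by
  have hA : LinearMap.toMatrix b b f = Matrix.diagonal d := by
    ext i j
    rw [LinearMap.toMatrix_apply, h j, map_smul, Module.Basis.repr_self]
    by_cases hij : i = j
    · subst hij; simp
    · simp [Finsupp.single_apply, Matrix.diagonal_apply_ne _ hij, Ne.symm hij]
  rw [← LinearMap.charpoly_toMatrix f b, hA, aux_charpoly_diagonal]

private lemma aux_rootMult {ι : Type*} [Fintype ι] [DecidableEq ι] (g : ι → ℂ) :
    rootMultiplicity 0 (∏ p, (X - C (g p))) = (Finset.univ.filter fun p => g p = 0).card := by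
  classical
  rw [← Polynomial.count_roots]
  have h1 : (∏ p, (X - C (g p))) = (Multiset.map (fun a => X - C a) (Finset.univ.val.map g)).prod := by
    rw [Multiset.map_map]
    rfl
  rw [h1, Polynomial.roots_multiset_prod_X_sub_C, Multiset.count_map]
  rw [Finset.card, Finset.filter_val]
  congr 1
  exact Multiset.filter_congr (fun x _ => eq_comm)

private lemma aux_hasEigenvalue_of_root (φ : Module.End ℂ V) (μ : ℂ)
    (h : φ.charpoly.IsRoot μ) : φ.HasEigenvalue μ := by
  classical
  let b := Module.finBasis ℂ V
  set A := LinearMap.toMatrix b b φ with hA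
  have h1 : Polynomial.eval μ A.charpoly = 0 := by
    rw [LinearMap.charpoly_toMatrix]; exact h
  have h2 : ((μ • 1 : Matrix (Fin (Module.finrank ℂ V)) (Fin (Module.finrank ℂ V)) ℂ) - A).det = 0 := by
    rw [Matrix.charpoly, _root_.eval_det, Matrix.matPolyEquiv_charmatrix,
      eval_sub, eval_X, eval_C] at h1
    have hs : (Matrix.scalar (Fin (Module.finrank ℂ V)) μ)
        = (μ • 1 : Matrix (Fin (Module.finrank ℂ V)) (Fin (Module.finrank ℂ V)) ℂ) := by
      refine Matrix.ext fun i j => ?_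
      by_cases hij : i = j
      · subst hij; simp [Matrix.scalar_apply, Matrix.one_apply]
      · simp [Matrix.scalar_apply, Matrix.one_apply, Matrix.diagonal_apply_ne _ hij, hij]
    rwa [hs] at h1
  have h3 : LinearMap.det ((μ • 1 : Module.End ℂ V) - φ) = 0 := by
    rw [← LinearMap.det_toMatrix b, map_sub, map_smul, ← hA]
    have hone : LinearMap.toMatrix b b (1 : Module.End ℂ V) = 1 := LinearMap.toMatrix_one b
    rw [hone]; exact h2
  have h4 := LinearMap.bot_lt_ker_of_det_eq_zero h3
  rw [Module.End.hasEigenvalue_iff, Module.End.eigenspace_def]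
  have h5 : LinearMap.ker (φ - μ • 1) = LinearMap.ker ((μ • 1 : Module.End ℂ V) - φ) := by
    ext x
    simp only [LinearMap.mem_ker, LinearMap.sub_apply, LinearMap.smul_apply, Module.End.one_apply]
    rw [show φ x - μ • x = -(μ • x - φ x) from (neg_sub _ _).symm, neg_eq_zero]
  rw [h5]
  exact ne_bot_of_gt h4

private lemma aux_ad_charpoly {W : Type*} [AddCommGroup W] [Module ℂ W]
    [FiniteDimensional ℂ W] {n : ℕ}
    (φ : Module.End ℂ W) (b : Module.Basis (Fin n) ℂ W) (l : Fin n → ℂ)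
    (hb : ∀ i, φ (b i) = l i • b i) :
    (LinearMap.mulLeft ℂ φ - LinearMap.mulRight ℂ φ).charpoly
      = ∏ p : Fin n × Fin n, (X - C (l p.1 - l p.2)) := by
  classical
  let e := LinearMap.toMatrixAlgEquiv b
  set A : Matrix (Fin n) (Fin n) ℂ := Matrix.diagonal l with hAdef
  have heφ : e φ = A := by
    refine Matrix.ext fun i j => ?_
    show (LinearMap.toMatrix b b φ) i j = A i j
    rw [LinearMap.toMatrix_apply, hb j, map_smul, Module.Basis.repr_self]
    by_cases hij : i = j
    · subst hij; simp [hAdef]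
    · simp [hAdef, Finsupp.single_apply, Matrix.diagonal_apply_ne _ hij, Ne.symm hij]
  have hconj : (e.toLinearEquiv.conj) (LinearMap.mulLeft ℂ φ - LinearMap.mulRight ℂ φ)
      = LinearMap.mulLeft ℂ A - LinearMap.mulRight ℂ A := by
    apply LinearMap.ext
    intro x
    rw [LinearEquiv.conj_apply]
    simp only [LinearMap.coe_comp, Function.comp_apply, LinearMap.sub_apply,
      LinearMap.mulLeft_apply, LinearMap.mulRight_apply, LinearEquiv.coe_coe,
      AlgEquiv.toLinearEquiv_apply, AlgEquiv.toLinearEquiv_symm]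
    rw [map_sub, map_mul, map_mul, heφ]
    rw [show e ((e : (W →ₗ[ℂ] W) ≃ₗ[ℂ] Matrix (Fin n) (Fin n) ℂ).symm x) = x from
      e.toLinearEquiv.apply_symm_apply x]
  rw [← LinearEquiv.charpoly_conj e.toLinearEquiv, hconj]
  refine aux_charpoly_of_diag (Matrix.stdBasis ℂ (Fin n) (Fin n)) _
    (fun p => l p.1 - l p.2) ?_
  rintro ⟨i, j⟩
  rw [Matrix.stdBasis_eq_single]
  refine Matrix.ext fun a c => ?_
  simp only [LinearMap.sub_apply, LinearMap.mulLeft_apply, LinearMap.mulRight_apply,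
    Matrix.sub_apply, Matrix.smul_apply, smul_eq_mul, hAdef,
    Matrix.diagonal_mul, Matrix.mul_diagonal]
  rw [Matrix.single]
  simp only [Matrix.of_apply]
  by_cases hia : i = a
  · by_cases hjc : j = c
    · subst hia; subst hjc; simp
    · simp [hjc]
  · simp [hia]

private lemma aux_backward {V : Type*} [AddCommGroup V] [Module ℂ V] [FiniteDimensional ℂ V]
    {n : ℕ} (hn : Module.finrank ℂ V = n) (φ : Module.End ℂ V)
    (h : Polynomial.rootMultiplicity 0
      ((LinearMap.mulLeft ℂ φ - LinearMap.mulRight ℂ φ).charpoly) = n) :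
    ∃ l : Fin n → ℂ, Function.Injective l ∧ φ.charpoly = ∏ i, (X - C (l i)) := by
  classical
  set k0 : ℕ := Module.finrank ℂ V with hk0def
  set ψ : Module.End ℂ (Module.End ℂ V) := LinearMap.mulLeft ℂ φ - LinearMap.mulRight ℂ φ
    with hψdef
  have hE : Module.finrank ℂ (ψ.maxGenEigenspace 0) = n := by
    rw [LinearMap.finrank_maxGenEigenspace_zero_eq, ← Polynomial.rootMultiplicity_eq_natTrailingDegree']
    exact h
  set G : ℂ → Submodule ℂ V := φ.maxGenEigenspace with hGdef
  have hInd : iSupIndep G := φ.independent_maxGenEigenspace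
  have hTop : ⨆ μ, G μ = ⊤ := φ.iSup_maxGenEigenspace_eq_top
  have hfin : {μ : ℂ | G μ ≠ ⊥}.Finite := Submodule.finite_ne_bot_of_iSupIndep hInd
  have internal : DirectSum.IsInternal G :=
    DirectSum.isInternal_submodule_of_iSupIndep_of_iSup_eq_top hInd hTop
  set S : Finset ℂ := hfin.toFinset with hSdef
  have internalS : DirectSum.IsInternal (fun μ : S => G μ) := by
    convert DirectSum.isInternal_ne_bot_iff.mpr internal <;> simp [hSdef]
  have hsum : ∑ μ : S, Module.finrank ℂ (G μ) = n := by
    rw [← hn, hk0def,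
      ← (LinearEquiv.ofBijective (DirectSum.coeLinearMap fun μ : S => G μ) internalS).finrank_eq,
      Module.finrank_directSum]
  letI dec : DirectSum.Decomposition G := DirectSum.IsInternal.chooseDecomposition G internal
  set prG : ∀ μ : ℂ, V →ₗ[ℂ] G μ := fun μ =>
    (DFinsupp.lapply μ) ∘ₗ (DirectSum.decomposeLinearEquiv G).toLinearMap with hprGdef
  have prG_apply : ∀ (μ : ℂ) (x : V), prG μ x = DirectSum.decompose G x μ := fun μ x => rfl
  have prG_same : ∀ (μ : ℂ) (x : V), x ∈ G μ → (prG μ x : V) = x := by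
    intro μ x hx; rw [prG_apply]; exact DirectSum.decompose_of_mem_same G hx
  have prG_ne : ∀ (μ ν : ℂ), ν ≠ μ → ∀ x : V, x ∈ G ν → prG μ x = 0 := by
    intro μ ν hνμ x hx
    have h2 := DirectSum.decompose_of_mem_ne G hx hνμ
    rw [prG_apply]
    exact Subtype.ext (by simpa using h2)
  have hmaps : ∀ ν, Set.MapsTo φ (G ν) (G ν) := fun ν => φ.mapsTo_maxGenEigenspace_of_comm rfl ν
  set φr : ∀ μ : ℂ, Module.End ℂ (G μ) := fun μ => φ.restrict (hmaps μ) with hφrdef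
  have hequiv : ∀ (μ : ℂ) (x : V), prG μ (φ x) = φr μ (prG μ x) := by
    intro μ x
    have hx : x ∈ ⨆ ν, G ν := hTop ▸ Submodule.mem_top
    refine Submodule.iSup_induction G (motive := fun x => prG μ (φ x) = φr μ (prG μ x)) hx ?_ ?_ ?_
    · intro ν z hz
      by_cases hνμ : ν = μ
      · subst hνμ
        apply Subtype.ext
        rw [prG_same ν (φ z) (hmaps ν hz)]
        exact (congrArg φ (prG_same ν z hz)).symm
      · rw [prG_ne μ ν hνμ z hz, prG_ne μ ν hνμ _ (hmaps ν hz), map_zero]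
    · simp
    · intro a b ha hb; simp only [map_add, ha, hb]
  set N : ℂ → Module.End ℂ V := fun μ => φ - μ • 1 with hNdef
  set Nr : ∀ μ : ℂ, Module.End ℂ (G μ) := fun μ => φr μ - μ • 1 with hNrdef
  have hequivN : ∀ (μ : ℂ) (x : V), prG μ (N μ x) = Nr μ (prG μ x) := by
    intro μ x
    simp only [hNdef, hNrdef, LinearMap.sub_apply, LinearMap.smul_apply, Module.End.one_apply,
      map_sub, map_smul]
    rw [hequiv]
  have hequivNpow : ∀ (μ : ℂ) (j : ℕ) (x : V), prG μ ((N μ ^ j) x) = (Nr μ ^ j) (prG μ x) := by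
    intro μ j
    induction j with
    | zero => intro x; simp
    | succ j ih =>
      intro x
      rw [pow_succ, Module.End.mul_apply, pow_succ, Module.End.mul_apply, ih, hequivN]
  have hNk : ∀ (μ : ℂ) (x : V), x ∈ G μ → (N μ ^ k0) x = 0 := by
    intro μ x hx
    rw [hGdef, Module.End.maxGenEigenspace_eq_genEigenspace_finrank,
      Module.End.genEigenspace_nat] at hx
    exact hx
  have hNrcoe1 : ∀ (μ : ℂ) (z : G μ), ((Nr μ) z : V) = N μ (z : V) := by
    intro μ z
    show ((φr μ - μ • 1) z : V) = (φ - μ • 1) (z : V)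
    rw [LinearMap.sub_apply, LinearMap.sub_apply, Submodule.coe_sub,
      (rfl : ((φr μ) z : V) = φ z), LinearMap.smul_apply, LinearMap.smul_apply,
      SetLike.val_smul, Module.End.one_apply, Module.End.one_apply]
    rfl
  have hNrcoe : ∀ (μ : ℂ) (j : ℕ) (z : G μ), ((Nr μ ^ j) z : V) = (N μ ^ j) (z : V) := by
    intro μ j
    induction j with
    | zero => intro z; simp
    | succ j ih =>
      intro z
      rw [pow_succ, Module.End.mul_apply, pow_succ, Module.End.mul_apply, ih, hNrcoe1]
  have hNrk : ∀ μ : ℂ, Nr μ ^ k0 = 0 := by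
    intro μ
    apply LinearMap.ext
    intro z
    rw [LinearMap.zero_apply]
    apply Subtype.ext
    rw [hNrcoe μ k0 z, hNk μ (z : V) z.2, Submodule.coe_zero]
  -- membership of compressions in the generalized 0-eigenspace of ψ
  have hmem : ∀ (μ : ℂ), μ ∈ S → ∀ y : G μ →ₗ[ℂ] G μ,
      (((G μ).subtype ∘ₗ y) ∘ₗ prG μ) ∈ ψ.maxGenEigenspace 0 := by
    intro μ _ y
    rw [Module.End.mem_maxGenEigenspace]
    refine ⟨2 * k0, ?_⟩
    rw [zero_smul, sub_zero]
    have hψN : ψ = LinearMap.mulLeft ℂ (N μ) - LinearMap.mulRight ℂ (N μ) := by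
      apply LinearMap.ext
      intro x
      show φ * x - x * φ = (N μ) * x - x * (N μ)
      simp only [hNdef, sub_mul, mul_sub, smul_mul_assoc, mul_smul_comm, one_mul, mul_one]
      abel
    have hcomm : Commute (LinearMap.mulLeft ℂ (N μ)) (-(LinearMap.mulRight ℂ (N μ))) :=
      (LinearMap.commute_mulLeft_right (R := ℂ) (N μ) (N μ)).neg_right
    rw [hψN, sub_eq_add_neg, hcomm.add_pow, LinearMap.sum_apply]
    apply Finset.sum_eq_zero
    intro m hm
    rw [Finset.mem_range, Nat.lt_succ_iff] at hm
    set j : ℕ := 2 * k0 - m with hjdef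
    have hLR : ((LinearMap.mulLeft ℂ (N μ)) ^ m)
        (((LinearMap.mulRight ℂ (N μ)) ^ j) (((G μ).subtype ∘ₗ y) ∘ₗ prG μ)) = 0 := by
      rw [LinearMap.pow_mulLeft, LinearMap.pow_mulRight, LinearMap.mulRight_apply,
        LinearMap.mulLeft_apply]
      apply LinearMap.ext
      intro x
      rcases le_or_gt k0 m with hk | hk
      · have hz : ∀ z : G μ, (N μ ^ m) (z : V) = 0 := by
          intro z
          rw [← Nat.sub_add_cancel hk, pow_add, Module.End.mul_apply, hNk μ (z : V) z.2, map_zero]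
        calc ((N μ ^ m) * ((((G μ).subtype ∘ₗ y) ∘ₗ prG μ) * (N μ ^ j))) x
            = (N μ ^ m) ((y (prG μ ((N μ ^ j) x)) : V)) := rfl
          _ = 0 := hz _
          _ = (0 : Module.End ℂ V) x := rfl
      · have hj : k0 ≤ j := by omega
        have hpr : prG μ ((N μ ^ j) x) = 0 := by
          rw [hequivNpow, ← Nat.sub_add_cancel hj, pow_add, Module.End.mul_apply, hNrk μ,
            LinearMap.zero_apply, map_zero]
        calc ((N μ ^ m) * ((((G μ).subtype ∘ₗ y) ∘ₗ prG μ) * (N μ ^ j))) x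
            = (N μ ^ m) ((y (prG μ ((N μ ^ j) x)) : V)) := rfl
          _ = 0 := by rw [hpr, map_zero, Submodule.coe_zero, map_zero]
          _ = (0 : Module.End ℂ V) x := rfl
    have hneg : (-(LinearMap.mulRight ℂ (N μ))) ^ j
        = ((-1 : ℂ) ^ j) • (LinearMap.mulRight ℂ (N μ)) ^ j := by
      rw [← neg_one_smul ℂ (LinearMap.mulRight ℂ (N μ)), _root_.smul_pow]
    have hLR2 : ((LinearMap.mulLeft ℂ (N μ)) ^ m)
        (((-(LinearMap.mulRight ℂ (N μ))) ^ j) (((G μ).subtype ∘ₗ y) ∘ₗ prG μ)) = 0 := by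
      rw [hneg, LinearMap.smul_apply, map_smul, hLR, smul_zero]
    rw [Module.End.mul_apply, Module.End.mul_apply, Module.End.natCast_apply, map_nsmul,
      map_nsmul, hLR2, smul_zero]
  -- the compression linear map
  set Ψfun : (∀ μ : S, (G μ →ₗ[ℂ] G μ)) → Module.End ℂ V :=
    fun y => ∑ μ : S, (((G (μ : ℂ)).subtype ∘ₗ y μ) ∘ₗ prG (μ : ℂ)) with hΨfundef
  have hΨadd : ∀ y z, Ψfun (y + z) = Ψfun y + Ψfun z := by
    intro y z
    rw [hΨfundef, ← Finset.sum_add_distrib]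
    refine Finset.sum_congr rfl fun μ _ => ?_
    simp only [Pi.add_apply]
    rw [LinearMap.comp_add, LinearMap.add_comp]
  have hΨsmul : ∀ (c : ℂ) y, Ψfun (c • y) = c • Ψfun y := by
    intro c y
    rw [hΨfundef, Finset.smul_sum]
    refine Finset.sum_congr rfl fun μ _ => ?_
    simp only [Pi.smul_apply]
    rw [LinearMap.comp_smul, LinearMap.smul_comp]
  set Ψ : (∀ μ : S, (G μ →ₗ[ℂ] G μ)) →ₗ[ℂ] Module.End ℂ V :=
    { toFun := Ψfun, map_add' := hΨadd, map_smul' := hΨsmul } with hΨdef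
  have hΨmem : ∀ y, Ψ y ∈ ψ.maxGenEigenspace 0 := by
    intro y
    apply Submodule.sum_mem
    intro μ _
    exact hmem (μ : ℂ) (by simpa [hSdef] using μ.2) (y μ)
  have hΨinj : Function.Injective Ψ := by
    rw [injective_iff_map_eq_zero]
    intro y hy
    funext μ
    apply LinearMap.ext
    intro z
    have happ := congrArg (fun f : Module.End ℂ V => f (z : V)) hy
    simp only [hΨdef, LinearMap.coe_mk, AddHom.coe_mk, hΨfundef, LinearMap.sum_apply,
      LinearMap.comp_apply, LinearMap.zero_apply] at happ
    rw [Finset.sum_eq_single μ] at happ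
    · have hz : prG (μ : ℂ) (z : V) = z := Subtype.coe_injective (prG_same (μ : ℂ) (z : V) z.2)
      rw [hz] at happ
      rw [Pi.zero_apply, LinearMap.zero_apply]
      exact Subtype.ext (by simpa using happ)
    · intro ν _ hνμ
      have hco : (μ : ℂ) ≠ (ν : ℂ) := fun hc => hνμ (Subtype.ext hc.symm)
      rw [prG_ne (ν : ℂ) (μ : ℂ) hco (z : V) z.2, map_zero, map_zero]
    · intro hμ; exact absurd (Finset.mem_univ μ) hμ
  have hdim : ∑ μ : S, Module.finrank ℂ (G μ) * Module.finrank ℂ (G μ) ≤ n := by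
    rw [← hE]
    have hinj2 : Function.Injective (LinearMap.codRestrict (ψ.maxGenEigenspace 0) Ψ hΨmem) :=
      fun a b hab => hΨinj (congrArg Subtype.val hab)
    have hle := LinearMap.finrank_le_finrank_of_injective hinj2
    calc ∑ μ : S, Module.finrank ℂ (G μ) * Module.finrank ℂ (G μ)
        = Module.finrank ℂ (∀ μ : S, (G μ →ₗ[ℂ] G μ)) := by
          rw [Module.finrank_pi_fintype]
          exact Finset.sum_congr rfl fun μ _ => (Module.finrank_linearMap ℂ ℂ _ _).symm
      _ ≤ _ := hle
  have hge1 : ∀ μ : S, 1 ≤ Module.finrank ℂ (G μ) := by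
    intro μ
    have hne : G (μ : ℂ) ≠ ⊥ := (hfin.mem_toFinset).mp μ.2
    rcases Nat.eq_zero_or_pos (Module.finrank ℂ (G μ)) with h0 | h1
    · exact absurd (Submodule.finrank_eq_zero.mp h0) hne
    · exact h1
  have hone : ∀ μ : S, Module.finrank ℂ (G μ) = 1 := by
    have hmono : ∀ μ ∈ (Finset.univ : Finset S),
        Module.finrank ℂ (G μ) ≤ Module.finrank ℂ (G μ) * Module.finrank ℂ (G μ) :=
      fun μ _ => Nat.le_mul_of_pos_left _ (hge1 μ)
    have heq := (Finset.sum_eq_sum_iff_of_le hmono).mp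
      (le_antisymm (Finset.sum_le_sum hmono) (le_trans hdim (le_of_eq hsum.symm)))
    intro μ
    have h2 := heq μ (Finset.mem_univ μ)
    exact (Nat.eq_of_mul_eq_mul_left (hge1 μ) (by rw [mul_one, ← h2])).symm
  have hEig : ∀ μ : S, ∃ v : V, φ.HasEigenvector (μ : ℂ) v := by
    intro μ
    have hfr : Module.finrank ℂ (G (μ : ℂ)) = 1 := hone μ
    let w : Module.Basis (Fin 1) ℂ (G (μ : ℂ)) := Module.finBasisOfFinrankEq ℂ _ hfr
    set z : G (μ : ℂ) := w 0 with hzdef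
    have hrep : ∀ u : G (μ : ℂ), u = (w.repr u 0) • z := by
      intro u
      conv_lhs => rw [← w.sum_repr u]
      rw [Fin.sum_univ_one]
    set c : ℂ := w.repr (Nr (μ : ℂ) z) 0 with hcdef
    have hNz : Nr (μ : ℂ) z = c • z := hrep _
    have hpow : ∀ j : ℕ, (Nr (μ : ℂ) ^ j) z = c ^ j • z := by
      intro j
      induction j with
      | zero => simp
      | succ j ih =>
        rw [pow_succ, Module.End.mul_apply, hNz, map_smul, ih, smul_smul, pow_succ, mul_comm]
    have hz0 : z ≠ 0 := w.ne_zero 0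
    have hk0ne : k0 ≠ 0 := by
      have hle := Submodule.finrank_le (G (μ : ℂ))
      rw [hfr] at hle
      omega
    have hc0 : c = 0 := by
      have h1 := hpow k0
      rw [hNrk (μ : ℂ), LinearMap.zero_apply] at h1
      have h2 : c ^ k0 = 0 := by
        rcases smul_eq_zero.mp h1.symm with h3 | h3
        · exact h3
        · exact absurd h3 hz0
      exact pow_eq_zero_iff hk0ne |>.mp h2
    have hNz0 : N (μ : ℂ) (z : V) = 0 := by
      rw [← pow_one (N (μ : ℂ)), ← hNrcoe (μ : ℂ) 1 z, pow_one, hNz, hc0, zero_smul,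
        Submodule.coe_zero]
    refine ⟨(z : V), ?_, ?_⟩
    · show (z : V) ∈ φ.eigenspace (μ : ℂ)
      rw [Module.End.eigenspace_def, LinearMap.mem_ker]
      exact hNz0
    · exact fun hc => hz0 (Subtype.coe_injective (by simpa using hc))
  have hcardS : Fintype.card S = n := by
    rw [← hsum]
    rw [Finset.sum_congr rfl fun μ _ => hone μ]
    simp
  choose v hv using hEig
  let e : Fin n ≃ S := (Fintype.equivFinOfCardEq hcardS).symm
  refine ⟨fun i => ((e i : ℂ)), fun i j hij => e.injective (Subtype.coe_injective hij), ?_⟩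
  rcases Nat.eq_zero_or_pos n with h0 | hpos
  · subst h0
    rw [Finset.univ_eq_empty, Finset.prod_empty]
    have hdeg : φ.charpoly.natDegree = 0 := by rw [φ.charpoly_natDegree, ← hk0def, hn]
    exact φ.charpoly_monic.natDegree_eq_zero.mp hdeg
  · haveI : Nonempty (Fin n) := ⟨⟨0, hpos⟩⟩
    have hvlin := φ.eigenvectors_linearIndependent' (fun i => ((e i : ℂ)))
      (fun i j hij => e.injective (Subtype.coe_injective hij)) (fun i => v (e i))
      (fun i => hv (e i))
    have hcard : Fintype.card (Fin n) = Module.finrank ℂ V := by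
      rw [Fintype.card_fin, ← hn, hk0def]
    refine aux_charpoly_of_diag (basisOfLinearIndependentOfCardEqFinrank hvlin hcard) φ _ ?_
    intro i
    rw [show (basisOfLinearIndependentOfCardEqFinrank hvlin hcard) i = v (e i) from
      congrFun (coe_basisOfLinearIndependentOfCardEqFinrank hvlin hcard) i]
    exact (hv (e i)).apply_eq_smul


end Aux

theorem stmt3 (V : Type*) [AddCommGroup V] [Module ℂ V] [FiniteDimensional ℂ V]
    (n : ℕ) (hn : Module.finrank ℂ V = n) (φ : Module.End ℂ V) :
    (∃ l : Fin n → ℂ, Function.Injective l ∧ φ.charpoly = ∏ i, (X - C (l i))) ↔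
    Polynomial.rootMultiplicity 0
      ((LinearMap.mulLeft ℂ φ - LinearMap.mulRight ℂ φ).charpoly) = n := by
  classical
  constructor
  · rintro ⟨l, hl, hcp⟩
    have hkey : ∃ b : Module.Basis (Fin n) ℂ V, ∀ i, φ (b i) = l i • b i := by
      rcases Nat.eq_zero_or_pos n with h0 | hpos
      · exact ⟨Module.finBasisOfFinrankEq ℂ V hn, fun i => by subst h0; exact i.elim0⟩
      · have hev : ∀ i, φ.HasEigenvalue (l i) := by
          intro i
          apply aux_hasEigenvalue_of_root
          rw [IsRoot.def, hcp, eval_prod]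
          exact Finset.prod_eq_zero (Finset.mem_univ i) (by simp)
        choose v hv using fun i => (hev i).exists_hasEigenvector
        have hli := φ.eigenvectors_linearIndependent' l hl v hv
        haveI : Nonempty (Fin n) := ⟨⟨0, hpos⟩⟩
        have hcard : Fintype.card (Fin n) = Module.finrank ℂ V := by simp [hn]
        refine ⟨basisOfLinearIndependentOfCardEqFinrank hli hcard, fun i => ?_⟩
        rw [show (basisOfLinearIndependentOfCardEqFinrank hli hcard) i = v i from
          congrFun (coe_basisOfLinearIndependentOfCardEqFinrank hli hcard) i]
        exact (hv i).apply_eq_smul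
    obtain ⟨b, hb⟩ := hkey
    rw [aux_ad_charpoly φ b l hb, aux_rootMult]
    have hfil : (Finset.univ.filter fun p : Fin n × Fin n => l p.1 - l p.2 = 0)
        = Finset.univ.image (fun i : Fin n => (i, i)) := by
      ext ⟨a, c⟩
      simp only [Finset.mem_filter, Finset.mem_univ, true_and, Finset.mem_image, sub_eq_zero]
      constructor
      · intro h
        exact ⟨a, by rw [hl h]⟩
      · rintro ⟨i, hi⟩
        obtain ⟨rfl, rfl⟩ := Prod.mk.injEq .. ▸ hi
        rfl
    rw [hfil, Finset.card_image_of_injective _ (fun a c hac => by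
      simpa using congrArg Prod.fst hac)]
    simp
  · intro h
    exact aux_backward hn φ h
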